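/- Let G = B ⋉ A be a profinite group where A is a closed normal subgroup topologically isomorphic to a cartesian product ∏_{i∈I} ⟨a_i⟩ of cyclic groups of prime order with each ⟨a_i⟩ normal in G, and B is a closed subgroup isomorphic to a cartesian product of cyclic groups of prime order with G = BA and B ∩ A = 1. Then every open subgroup H of A has a G-invariant permutable complement in A: there exists L ≤ A normal in G with A = HL and H ∩ L = 1. -/

import Mathlib

open Pointwise

/-- Let `G = B ⋉ A` be a profinite group, where `A` is a closed normal subgroup that is
an internal cartesian product of subgroups `⟨a i⟩` of prime order, each normal in `G`,
and `B` is a closed subgroup that is an internal cartesian product of subgroups `⟨b j⟩`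
of prime order. Then every open subgroup `H` of `A` has a `G`-invariant permutable
complement in `A`. -/

lemma aux_normal_sSup {G : Type*} [Group G] (S : Set (Subgroup G))
    (h : ∀ K ∈ S, K.Normal) : (sSup S).Normal := by
  constructor
  intro n hn g
  rw [sSup_eq_iSup'] at hn ⊢
  refine Subgroup.iSup_induction (C := fun x => g * x * g⁻¹ ∈ ⨆ K : S, (K : Subgroup G))
      _ hn (fun K x hx => ?_) (by simpa using Subgroup.one_mem _) (fun x y hx hy => ?_)
  · exact le_iSup (fun K : S => (K : Subgroup G)) K ((h K K.2).conj_mem x hx g)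
  · show g * (x * y) * g⁻¹ ∈ _
    have : g * (x * y) * g⁻¹ = (g * x * g⁻¹) * (g * y * g⁻¹) := by group
    rw [this]; exact Subgroup.mul_mem _ hx hy

lemma aux_pow_mem {G : Type*} [Group G] {a : G} {p : ℕ} (hp : p.Prime)
    (hord : orderOf a = p) (M : Subgroup G) (haM : a ∉ M) {z : G}
    (hz : z ∈ Subgroup.zpowers a) (hzM : z ∈ M) : z = 1 := by
  obtain ⟨n, rfl⟩ := hz
  by_contra hne
  have hndvd : ¬ ((p : ℤ) ∣ n) := by
    rw [← hord]
    intro hd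
    exact hne (orderOf_dvd_iff_zpow_eq_one.mp hd)
  have hcop : IsCoprime (n : ℤ) (p : ℤ) := by
    rw [Int.isCoprime_iff_gcd_eq_one, Int.gcd]
    simp only [Int.natAbs_natCast]
    exact Nat.Coprime.symm (hp.coprime_iff_not_dvd.mpr (fun hd => hndvd (Int.natCast_dvd.mpr hd)))
  obtain ⟨u, v, huv⟩ := hcop
  have hap : a ^ (p : ℤ) = 1 := by
    rw [zpow_natCast, ← hord, pow_orderOf_eq_one]
  have : a = (a ^ n) ^ u * (a ^ (p : ℤ)) ^ v := by
    rw [← zpow_mul, ← zpow_mul, ← zpow_add, mul_comm n u, mul_comm (p:ℤ) v, huv, zpow_one]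
  rw [this, hap, one_zpow, mul_one] at haM
  exact haM (M.zpow_mem hzM u)

theorem stmt14 {G : Type*} [Group G] [TopologicalSpace G] [IsTopologicalGroup G]
    [CompactSpace G] [T2Space G] [TotallyDisconnectedSpace G]
    {I J : Type*} (A B : Subgroup G) [A.Normal]
    (hAc : IsClosed (A : Set G)) (hBc : IsClosed (B : Set G))
    (a : I → G) (haA : ∀ i, a i ∈ A)
    (hap : ∀ i, ∃ p : ℕ, p.Prime ∧ orderOf (a i) = p)
    (han : ∀ i, (Subgroup.zpowers (a i)).Normal)
    (hAgen : (⨆ i, Subgroup.zpowers (a i)).topologicalClosure = A)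
    (hAind : (⨅ i : I, (⨆ j ∈ ({i}ᶜ : Set I), Subgroup.zpowers (a j)).topologicalClosure) = ⊥)
    (b : J → G) (hbB : ∀ j, b j ∈ B)
    (hbp : ∀ j, ∃ p : ℕ, p.Prime ∧ orderOf (b j) = p)
    (hBgen : (⨆ j, Subgroup.zpowers (b j)).topologicalClosure = B)
    (hBind : (⨅ j : J, (⨆ k ∈ ({j}ᶜ : Set J), Subgroup.zpowers (b k)).topologicalClosure) = ⊥)
    (hsd : (B : Set G) * (A : Set G) = Set.univ) (hBA : B ⊓ A = ⊥) :
    ∀ H : Subgroup G, H ≤ A → IsOpen {x : A | (x : G) ∈ H} →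
      ∃ L : Subgroup G, L ≤ A ∧ L.Normal ∧
        (H : Set G) * (L : Set G) = (A : Set G) ∧ H ⊓ L = ⊥ := by
  intro H hHA hHopen
  -- H is closed (hence compact) in G
  have hHclosed : IsClosed (H : Set G) := by
    have hAcomp : IsCompact (A : Set G) := hAc.isCompact
    haveI : CompactSpace A := isCompact_iff_compactSpace.mp hAcomp
    have hS : {x : A | (x : G) ∈ H} = ((H.comap A.subtype : Subgroup A) : Set A) := rfl
    have hSclosed : IsClosed ((H.comap A.subtype : Subgroup A) : Set A) :=
      Subgroup.isClosed_of_isOpen _ (hS ▸ hHopen)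
    have himg : Subtype.val '' ((H.comap A.subtype : Subgroup A) : Set A) = (H : Set G) := by
      ext x
      constructor
      · rintro ⟨y, hy, rfl⟩; exact hy
      · intro hx; exact ⟨⟨x, hHA hx⟩, hx, rfl⟩
    have := (hSclosed.isCompact).image continuous_subtype_val
    rw [himg] at this
    exact this.isClosed
  -- key topological lemma
  have key : ∀ (T : Set G), T ⊆ (A : Set G) → (∀ x ∈ T, x ∈ H → x = 1) →
      ∀ x ∈ closure T, x ∈ H → x = 1 := by
    intro T hTA hT x hxc hxH
    have hxA : x ∈ A := hHA hxH
    by_contra hx1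
    have hVopen : IsOpen ({y : A | (y : G) ∈ H} ∩ {y : A | (y : G) ≠ 1}) := by
      refine hHopen.inter ?_
      exact (isOpen_compl_singleton (x := (1 : G))).preimage continuous_subtype_val
    obtain ⟨W, hWopen, hWV⟩ := isOpen_induced_iff.mp hVopen
    have hxW : x ∈ W := by
      have : (⟨x, hxA⟩ : A) ∈ Subtype.val ⁻¹' W := by
        rw [hWV]; exact ⟨hxH, hx1⟩
      exact this
    obtain ⟨t, htW, htT⟩ := mem_closure_iff.mp hxc W hWopen hxW
    have htA : t ∈ A := hTA htT
    have : (⟨t, htA⟩ : A) ∈ Subtype.val ⁻¹' W := htW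
    rw [hWV] at this
    exact this.2 (hT t htT this.1)
  -- the family of candidate subgroups for Zorn
  set 𝒮 : Set (Subgroup G) :=
    {L | IsClosed (L : Set G) ∧ L ≤ A ∧ L.Normal ∧ H ⊓ L = ⊥} with h𝒮
  have hbot : (⊥ : Subgroup G) ∈ 𝒮 := by
    refine ⟨?_, bot_le, inferInstance, inf_bot_eq H⟩
    simpa [Subgroup.coe_bot] using (isClosed_singleton (x := (1 : G)))
  have hub : ∀ c ⊆ 𝒮, IsChain (· ≤ ·) c → ∀ y ∈ c,
      ∃ ub ∈ 𝒮, ∀ z ∈ c, z ≤ ub := by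
    intro c hc hchain y hy
    refine ⟨(sSup c).topologicalClosure, ⟨Subgroup.isClosed_topologicalClosure _, ?_, ?_, ?_⟩, ?_⟩
    · exact Subgroup.topologicalClosure_minimal _ (sSup_le fun K hK => (hc hK).2.1) hAc
    · haveI := aux_normal_sSup c (fun K hK => (hc hK).2.2.1)
      exact Subgroup.is_normal_topologicalClosure _
    · rw [eq_bot_iff]
      rintro x ⟨hxH, hxL⟩
      have hmem : ∀ z ∈ (sSup c : Subgroup G), z ∈ H → z = 1 := by
        intro z hz hzH
        obtain ⟨K, hKc, hzK⟩ := (Subgroup.mem_sSup_of_directedOn ⟨y, hy⟩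
          hchain.directedOn).mp hz
        have := (hc hKc).2.2.2
        have : z ∈ H ⊓ K := ⟨hzH, hzK⟩
        rw [(hc hKc).2.2.2] at this
        simpa using this
      have hsub : ((sSup c : Subgroup G) : Set G) ⊆ (A : Set G) :=
        sSup_le (fun K hK => (hc hK).2.1)
      have : x = 1 := key _ hsub hmem x hxL hxH
      simpa using this
    · exact fun z hz => le_trans (le_sSup hz) (Subgroup.le_topologicalClosure _)
  obtain ⟨L, -, hLS, hLmax⟩ := zorn_le_nonempty₀ 𝒮 hub ⊥ hbot
  -- extract properties of L
  obtain ⟨hLclosed, hLA, hLnormal, hHL⟩ := hLS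
  haveI := hLnormal
  refine ⟨L, hLA, hLnormal, ?_, hHL⟩
  -- show H * L = A
  have hmulsup : (H : Set G) * (L : Set G) = ((H ⊔ L : Subgroup G) : Set G) :=
    (Subgroup.mul_normal H L).symm
  have hHLcomp : IsCompact ((H ⊔ L : Subgroup G) : Set G) := by
    rw [← hmulsup]
    exact hHclosed.isCompact.mul hLclosed.isCompact
  have hZle : ∀ i, Subgroup.zpowers (a i) ≤ H ⊔ L := by
    intro i
    by_contra hni
    have haiM : a i ∉ H ⊔ L := fun hm => hni (Subgroup.zpowers_le.mpr hm)
    obtain ⟨p, hp, hord⟩ := hap i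
    -- Z_i is finite, hence compact
    have hZfin : (Subgroup.zpowers (a i) : Set G).Finite := by
      have hfo : IsOfFinOrder (a i) := by
        rw [← orderOf_pos_iff, hord]; exact hp.pos
      rw [← hfo.powers_eq_zpowers]
      exact hfo.finite_powers
    haveI := han i
    set L' := L ⊔ Subgroup.zpowers (a i) with hL'
    have hL'mem : ∀ x ∈ L', ∃ l ∈ L, ∃ z ∈ Subgroup.zpowers (a i), x = l * z := by
      intro x hx
      have : x ∈ (L : Set G) * (Subgroup.zpowers (a i) : Set G) := by
        rw [← Subgroup.mul_normal L (Subgroup.zpowers (a i))]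
        exact hx
      obtain ⟨l, hl, z, hz, rfl⟩ := this
      exact ⟨l, hl, z, hz, rfl⟩
    have hL'S : L' ∈ 𝒮 := by
      refine ⟨?_, sup_le hLA (Subgroup.zpowers_le.mpr (haA i)), inferInstance, ?_⟩
      · have : ((L' : Subgroup G) : Set G) = (L : Set G) * (Subgroup.zpowers (a i) : Set G) :=
          Subgroup.mul_normal L (Subgroup.zpowers (a i))
        rw [this]
        exact (hLclosed.isCompact.mul hZfin.isCompact).isClosed
      · rw [eq_bot_iff]
        rintro x ⟨hxH, hxL'⟩
        obtain ⟨l, hl, z, hz, rfl⟩ := hL'mem _ hxL'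
        have hzM : z ∈ H ⊔ L := by
          have : z = l⁻¹ * (l * z) := by group
          rw [this]
          exact Subgroup.mul_mem _ (Subgroup.mem_sup_right (Subgroup.inv_mem _ hl))
            (Subgroup.mem_sup_left hxH)
        have hz1 : z = 1 := aux_pow_mem hp hord (H ⊔ L) haiM hz hzM
        rw [hz1, mul_one] at hxH ⊢
        have : l ∈ H ⊓ L := ⟨hxH, hl⟩
        rw [hHL] at this
        simpa using this
    have hLL' : L ≤ L' := le_sup_left
    have heq : L' = L := le_antisymm (hLmax hL'S hLL') hLL'
    have haiL : a i ∈ L := by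
      rw [← heq]
      exact Subgroup.mem_sup_right (Subgroup.mem_zpowers _)
    exact haiM (Subgroup.mem_sup_right haiL)
  have hsupA : H ⊔ L = A := by
    refine le_antisymm (sup_le hHA hLA) ?_
    rw [← hAgen]
    exact Subgroup.topologicalClosure_minimal _ (iSup_le hZle) hHLcomp.isClosed
  rw [hmulsup, hsupA]
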